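/- Let P be an r-differential poset (r ≥ 1) and let n ≥ 0. Then the characteristic polynomial of the operator DU_n satisfies det(DU_n + tI) = ∏_{i=0}^{n} (t + r(i+1))^{Δp_{n-i}}, where Δp_m := p_m − p_{m−1} (with p_{−1} := 0). Equivalently, viewing DU_n as a p_n × p_n integer matrix, for every integer (or rational) t this determinant identity holds. -/

import Mathlib

open Matrix

variable {α : Type*}

/-- The generalized factorial `ℓ!_{r,k} = (rℓ+k)(r(ℓ-1)+k)⋯(r·1+k)`. -/
def genFac (r k ℓ : ℕ) : ℕ := ∏ i ∈ Finset.range ℓ, (r * (i + 1) + k)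

open Classical in
/-- The matrix of the up map `U_n : ℚP_n → ℚP_{n+1}`. -/
noncomputable def upMat [PartialOrder α] (rk : α → ℕ) (n : ℕ) :
    Matrix {x : α // rk x = n + 1} {x : α // rk x = n} ℚ :=
  Matrix.of fun z x => if x.1 ⋖ z.1 then 1 else 0

/-- The matrix of `DU_n := D_{n+1} U_n`. -/
noncomputable def duMat [PartialOrder α] (rk : α → ℕ)
    [∀ n : ℕ, Fintype {x : α // rk x = n}] (n : ℕ) :
    Matrix {x : α // rk x = n} {x : α // rk x = n} ℚ :=
  (upMat rk n)ᵀ * upMat rk n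

/-- `upIter rk m j v` is `U^j v` for `v ∈ ℚP_m`. -/
noncomputable def upIter [PartialOrder α] (rk : α → ℕ)
    [∀ n : ℕ, Fintype {x : α // rk x = n}] (m : ℕ) :
    (j : ℕ) → ({x : α // rk x = m} → ℚ) → ({x : α // rk x = m + j} → ℚ)
  | 0, v => v
  | j + 1, v => (upMat rk (m + j)).mulVec (upIter rk m j v)

/-- Transport a vector along an equality of ranks. -/
noncomputable def rankCast [PartialOrder α] (rk : α → ℕ) (m n : ℕ)
    (v : {x : α // rk x = m} → ℚ) : {x : α // rk x = n} → ℚ :=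
  fun x => if h : rk x.1 = m then v ⟨x.1, h⟩ else 0

open Classical in
/-- The standard basis vector of `y` in `ℚP_n`. -/
noncomputable def basisVec [PartialOrder α] (rk : α → ℕ) (n : ℕ) (y : α) :
    {x : α // rk x = n} → ℚ :=
  fun x => if x.1 = y then 1 else 0

/-- The vector `v_{n,k} := Σ_{j=0}^n (-1)^j U^j t_{n-j} / (j+1)!_{r,k}`. -/
noncomputable def vVec [PartialOrder α] (rk : α → ℕ)
    [∀ n : ℕ, Fintype {x : α // rk x = n}] (t : ℕ → α) (r k n : ℕ) :
    {x : α // rk x = n} → ℚ :=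
  ∑ j ∈ Finset.range (n + 1),
    ((-1 : ℚ) ^ j / (genFac r k (j + 1) : ℚ)) •
      rankCast rk ((n - j) + j) n (upIter rk (n - j) j (basisVec rk (n - j) (t (n - j))))


section AuxStanley
open Polynomial

lemma eval_det_aux {k : Type*} [Fintype k] [DecidableEq k] (A : Matrix k k ℚ) (u : ℚ) :
    eval u ((A.map C + (X : ℚ[X]) • 1).det) = (A + u • 1).det := by
  rw [← Polynomial.coe_evalRingHom, RingHom.map_det]
  congr 1
  ext i j
  by_cases hij : i = j <;>
    simp [Matrix.one_apply, hij, Matrix.map_apply]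

lemma step_det {M N : Type*} [Fintype M] [Fintype N] [DecidableEq M] [DecidableEq N]
    (B : Matrix M N ℚ) (h : Fintype.card N ≤ Fintype.card M) (s : ℚ) :
    (B * Bᵀ + s • 1).det = s ^ (Fintype.card M - Fintype.card N) * (Bᵀ * B + s • 1).det := by
  set cm := Fintype.card M
  set cn := Fintype.card N
  have key : ∀ u : ℚ, u ≠ 0 →
      (B * Bᵀ + u • 1).det = u ^ (cm - cn) * (Bᵀ * B + u • 1).det := by
    intro u hu
    have h1 : B * Bᵀ + u • 1 = u • (B * (u⁻¹ • Bᵀ) + 1) := by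
      rw [smul_add, Matrix.mul_smul, smul_smul, mul_inv_cancel₀ hu, one_smul]
    have h2 : (u⁻¹ • Bᵀ) * B + 1 = u⁻¹ • (Bᵀ * B + u • 1) := by
      rw [smul_add, Matrix.smul_mul, smul_smul, inv_mul_cancel₀ hu, one_smul]
    rw [h1, Matrix.det_smul, Matrix.det_mul_add_one_comm, h2, Matrix.det_smul, ← mul_assoc]
    congr 1
    rw [inv_pow, pow_sub₀ _ hu h]
  have hP : ((B * Bᵀ).map C + (X : ℚ[X]) • 1).det
      = X ^ (cm - cn) * ((Bᵀ * B).map C + (X : ℚ[X]) • 1).det := by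
    apply Polynomial.eq_of_infinite_eval_eq
    apply Set.Infinite.mono (s := {x : ℚ | x ≠ 0})
    · intro u hu
      simp only [Set.mem_setOf_eq, eval_mul, eval_pow, eval_X, eval_det_aux]
      exact key u hu
    · exact Set.Finite.infinite_compl (Set.finite_singleton (0:ℚ))
  have := congrArg (eval s) hP
  simpa only [eval_mul, eval_pow, eval_X, eval_det_aux] using this

lemma ite_inst {c : Prop} (h1 h2 : Decidable c) (a b : ℚ) :
    @ite _ c h1 a b = @ite _ c h2 a b := by
  cases Subsingleton.elim h1 h2; rfl

open Classical in
lemma sum_ite_ncard [PartialOrder α] (rk : α → ℕ) [∀ n : ℕ, Fintype {x : α // rk x = n}]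
    (m : ℕ) (p : α → Prop) (hp : ∀ z, p z → rk z = m) :
    ∑ z : {x : α // rk x = m}, (if p z.1 then (1:ℚ) else 0) = ({z : α | p z}.ncard : ℚ) := by
  classical
  have himg : {z : α | p z} = Subtype.val '' {z : {x : α // rk x = m} | p z.1} := by
    ext z
    simp only [Set.mem_image, Set.mem_setOf_eq]
    exact ⟨fun hz => ⟨⟨z, hp z hz⟩, hz, rfl⟩, fun ⟨w, hw, hwz⟩ => hwz ▸ hw⟩
  rw [himg, Set.ncard_image_of_injective _ Subtype.val_injective,
    Set.ncard_eq_toFinset_card']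
  rw [Finset.sum_boole]
  congr 1
  rw [Set.toFinset_setOf]

open Classical in
lemma duMat_apply [PartialOrder α] (rk : α → ℕ) [∀ n : ℕ, Fintype {x : α // rk x = n}]
    (hgrade : ∀ x y : α, x ⋖ y → rk y = rk x + 1) (n : ℕ) (x y : {x : α // rk x = n}) :
    duMat rk n x y = ({z : α | x.1 ⋖ z ∧ y.1 ⋖ z}.ncard : ℚ) := by
  classical
  have : duMat rk n x y
      = ∑ z : {w : α // rk w = n + 1}, if (x.1 ⋖ z.1 ∧ y.1 ⋖ z.1) then (1:ℚ) else 0 := by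
    simp only [duMat, upMat, Matrix.mul_apply, Matrix.transpose_apply, Matrix.of_apply,
      ite_and]
    refine Finset.sum_congr rfl fun z _ => ?_
    by_cases h1 : x.1 ⋖ z.1 <;> by_cases h2 : y.1 ⋖ z.1 <;> simp [h1, h2]
  rw [this, ← sum_ite_ncard rk (n+1) (fun z => x.1 ⋖ z ∧ y.1 ⋖ z)
    (fun z hz => by rw [hgrade _ _ hz.1, x.2])]
  exact Finset.sum_congr rfl fun z _ => ite_inst _ _ _ _

open Classical in
lemma uut_apply [PartialOrder α] (rk : α → ℕ) [∀ n : ℕ, Fintype {x : α // rk x = n}]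
    (hgrade : ∀ x y : α, x ⋖ y → rk y = rk x + 1) (n : ℕ) (x y : {x : α // rk x = n + 1}) :
    (upMat rk n * (upMat rk n)ᵀ) x y = ({w : α | w ⋖ x.1 ∧ w ⋖ y.1}.ncard : ℚ) := by
  classical
  have : (upMat rk n * (upMat rk n)ᵀ) x y
      = ∑ w : {w : α // rk w = n}, if (w.1 ⋖ x.1 ∧ w.1 ⋖ y.1) then (1:ℚ) else 0 := by
    simp only [upMat, Matrix.mul_apply, Matrix.transpose_apply, Matrix.of_apply]
    refine Finset.sum_congr rfl fun w _ => ?_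
    by_cases h1 : w.1 ⋖ x.1 <;> by_cases h2 : w.1 ⋖ y.1 <;> simp [h1, h2]
  rw [this, ← sum_ite_ncard rk n (fun w => w ⋖ x.1 ∧ w ⋖ y.1)
    (fun w hw => by have := hgrade _ _ hw.1; rw [x.2] at this; omega)]
  exact Finset.sum_congr rfl fun w _ => ite_inst _ _ _ _

open Classical in
lemma duMat_zero [PartialOrder α] (rk : α → ℕ) (r : ℕ) [∀ n : ℕ, Fintype {x : α // rk x = n}]
    (hgrade : ∀ x y : α, x ⋖ y → rk y = rk x + 1)
    (hD1 : ∀ x : α, {z : α | x ⋖ z}.ncard = {y : α | y ⋖ x}.ncard + r)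
    (hD2 : ∀ x y : α, x ≠ y →
      {z : α | z ⋖ x ∧ z ⋖ y}.ncard = {z : α | x ⋖ z ∧ y ⋖ z}.ncard) :
    duMat rk 0 = (r : ℚ) • 1 := by
  ext x y
  rw [duMat_apply rk hgrade 0 x y]
  by_cases hxy : x = y
  · subst hxy
    have h1 : {z : α | x.1 ⋖ z ∧ x.1 ⋖ z} = {z : α | x.1 ⋖ z} := by
      ext z; simp
    have h2 : {w : α | w ⋖ x.1} = ∅ := by
      ext w
      simp only [Set.mem_setOf_eq, Set.mem_empty_iff_false, iff_false]
      intro hw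
      have := hgrade _ _ hw
      rw [x.2] at this
      omega
    rw [h1, hD1 x.1, h2]
    simp [Matrix.smul_apply, Matrix.one_apply_eq]
  · have hne : x.1 ≠ y.1 := fun h => hxy (Subtype.ext h)
    rw [← hD2 _ _ hne]
    have h2 : {z : α | z ⋖ x.1 ∧ z ⋖ y.1} = ∅ := by
      ext w
      simp only [Set.mem_setOf_eq, Set.mem_empty_iff_false, iff_false]
      rintro ⟨hw, -⟩
      have := hgrade _ _ hw
      rw [x.2] at this
      omega
    simp [h2, Matrix.smul_apply, Matrix.one_apply_ne hxy]

open Classical in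
lemma duMat_succ [PartialOrder α] (rk : α → ℕ) (r : ℕ) [∀ n : ℕ, Fintype {x : α // rk x = n}]
    (hgrade : ∀ x y : α, x ⋖ y → rk y = rk x + 1)
    (hD1 : ∀ x : α, {z : α | x ⋖ z}.ncard = {y : α | y ⋖ x}.ncard + r)
    (hD2 : ∀ x y : α, x ≠ y →
      {z : α | z ⋖ x ∧ z ⋖ y}.ncard = {z : α | x ⋖ z ∧ y ⋖ z}.ncard) (n : ℕ) :
    duMat rk (n + 1) = (r : ℚ) • 1 + upMat rk n * (upMat rk n)ᵀ := by
  ext x y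
  rw [duMat_apply rk hgrade (n+1) x y]
  by_cases hxy : x = y
  · subst hxy
    rw [Matrix.add_apply, uut_apply rk hgrade n x x]
    have h1 : {z : α | x.1 ⋖ z ∧ x.1 ⋖ z} = {z : α | x.1 ⋖ z} := by ext z; simp
    have h2 : {w : α | w ⋖ x.1 ∧ w ⋖ x.1} = {w : α | w ⋖ x.1} := by ext w; simp
    rw [h1, h2, hD1 x.1]
    simp only [Matrix.smul_apply, Matrix.one_apply_eq, smul_eq_mul, mul_one]
    push_cast
    ring
  · have hne : x.1 ≠ y.1 := fun h => hxy (Subtype.ext h)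
    rw [Matrix.add_apply, uut_apply rk hgrade n x y, ← hD2 _ _ hne]
    simp [Matrix.smul_apply, Matrix.one_apply_ne hxy]

lemma dot_self_nonneg {k : Type*} [Fintype k] (w : k → ℚ) : 0 ≤ w ⬝ᵥ w :=
  Finset.sum_nonneg fun i _ => mul_self_nonneg (w i)

open Classical in
lemma duMat_pos [PartialOrder α] (rk : α → ℕ) (r : ℕ) [∀ n : ℕ, Fintype {x : α // rk x = n}]
    (hr : 1 ≤ r)
    (hgrade : ∀ x y : α, x ⋖ y → rk y = rk x + 1)
    (hD1 : ∀ x : α, {z : α | x ⋖ z}.ncard = {y : α | y ⋖ x}.ncard + r)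
    (hD2 : ∀ x y : α, x ≠ y →
      {z : α | z ⋖ x ∧ z ⋖ y}.ncard = {z : α | x ⋖ z ∧ y ⋖ z}.ncard) (n : ℕ)
    (v : {x : α // rk x = n} → ℚ) (hv : v ≠ 0) :
    0 < v ⬝ᵥ (duMat rk n).mulVec v := by
  have hvv : 0 < v ⬝ᵥ v := by
    rcases lt_or_eq_of_le (dot_self_nonneg v) with h | h
    · exact h
    · exact absurd (dotProduct_self_eq_zero.mp h.symm) hv
  have hrpos : (0:ℚ) < r := by exact_mod_cast hr
  have hsmul : v ⬝ᵥ ((r:ℚ) • (1 : Matrix _ _ ℚ)).mulVec v = (r:ℚ) * (v ⬝ᵥ v) := by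
    rw [Matrix.smul_mulVec, Matrix.one_mulVec, dotProduct_smul, smul_eq_mul]
  cases n with
  | zero =>
    rw [duMat_zero rk r hgrade hD1 hD2, hsmul]
    exact mul_pos hrpos hvv
  | succ n =>
    rw [duMat_succ rk r hgrade hD1 hD2 n, Matrix.add_mulVec, dotProduct_add, hsmul]
    have : v ⬝ᵥ (upMat rk n * (upMat rk n)ᵀ).mulVec v
        = ((upMat rk n)ᵀ *ᵥ v) ⬝ᵥ ((upMat rk n)ᵀ *ᵥ v) := by
      rw [← Matrix.mulVec_mulVec, Matrix.dotProduct_mulVec, ← Matrix.mulVec_transpose]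
    rw [this]
    have := dot_self_nonneg ((upMat rk n)ᵀ *ᵥ v)
    nlinarith [mul_pos hrpos hvv]

open Classical in
lemma card_mono [PartialOrder α] (rk : α → ℕ) (r : ℕ) [∀ n : ℕ, Fintype {x : α // rk x = n}]
    (hr : 1 ≤ r)
    (hgrade : ∀ x y : α, x ⋖ y → rk y = rk x + 1)
    (hD1 : ∀ x : α, {z : α | x ⋖ z}.ncard = {y : α | y ⋖ x}.ncard + r)
    (hD2 : ∀ x y : α, x ≠ y →
      {z : α | z ⋖ x ∧ z ⋖ y}.ncard = {z : α | x ⋖ z ∧ y ⋖ z}.ncard) (n : ℕ) :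
    Fintype.card {x : α // rk x = n} ≤ Fintype.card {x : α // rk x = n + 1} := by
  have hinj : Function.Injective (upMat rk n).mulVecLin := by
    rw [← LinearMap.ker_eq_bot, LinearMap.ker_eq_bot']
    intro v hv0
    by_contra hv
    have h0 : v ⬝ᵥ (duMat rk n).mulVec v
        = (upMat rk n *ᵥ v) ⬝ᵥ (upMat rk n *ᵥ v) := by
      show v ⬝ᵥ ((upMat rk n)ᵀ * upMat rk n).mulVec v = _
      rw [← Matrix.mulVec_mulVec, Matrix.dotProduct_mulVec, Matrix.vecMul_transpose]
    rw [Matrix.mulVecLin_apply] at hv0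
    rw [hv0, dotProduct_zero] at h0
    exact absurd h0 (ne_of_gt (duMat_pos rk r hr hgrade hD1 hD2 n v hv))
  have := LinearMap.finrank_le_finrank_of_injective hinj
  simpa [Module.finrank_fintype_fun_eq_card] using this

open Classical in
lemma factor_congr [PartialOrder α] (rk : α → ℕ) [∀ n : ℕ, Fintype {x : α // rk x = n}]
    (c : ℚ) {a b : ℕ} (h : a = b) :
    c ^ ((Fintype.card {x : α // rk x = a} : ℤ) -
        (if a = 0 then 0 else (Fintype.card {x : α // rk x = a - 1} : ℤ)))
      = c ^ ((Fintype.card {x : α // rk x = b} : ℤ) -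
        (if b = 0 then 0 else (Fintype.card {x : α // rk x = b - 1} : ℤ))) := by
  subst h; rfl

end AuxStanley

open Classical in
/-- **Stanley's eigenvalue theorem.** For an `r`-differential poset,
`det(DU_n + tI) = ∏_{i=0}^n (t + r(i+1))^{Δp_{n-i}}` where `Δp_m = p_m - p_{m-1}`
(with `p_{-1} := 0`). -/
theorem stanley_eigenvalue_theorem [PartialOrder α] [OrderBot α]
    (rk : α → ℕ) (r : ℕ) [∀ n : ℕ, Fintype {x : α // rk x = n}]
    (hr : 1 ≤ r) (hbot : rk ⊥ = 0)
    (hgrade : ∀ x y : α, x ⋖ y → rk y = rk x + 1)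
    (hdown : ∀ x : α, x ≠ ⊥ → ∃ y : α, y ⋖ x)
    (hD1 : ∀ x : α, {z : α | x ⋖ z}.ncard = {y : α | y ⋖ x}.ncard + r)
    (hD2 : ∀ x y : α, x ≠ y →
      {z : α | z ⋖ x ∧ z ⋖ y}.ncard = {z : α | x ⋖ z ∧ y ⋖ z}.ncard)
    (n : ℕ) (t : ℚ) :
    (duMat rk n + t • 1).det =
      ∏ i ∈ Finset.range (n + 1),
        (t + (r : ℚ) * ((i : ℚ) + 1)) ^
          ((Fintype.card {x : α // rk x = n - i} : ℤ) -
            (if n - i = 0 then 0 else (Fintype.card {x : α // rk x = n - i - 1} : ℤ))) := by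
  classical
  induction n generalizing t with
  | zero =>
    rw [duMat_zero rk r hgrade hD1 hD2, ← add_smul, Matrix.det_smul, Matrix.det_one, mul_one,
      Finset.prod_range_one, if_pos (by rfl : (0:ℕ) - 0 = 0), sub_zero, zpow_natCast]
    congr 1
    push_cast
    ring
  | succ n ih =>
    have hmono := card_mono rk r hr hgrade hD1 hD2 n
    rw [duMat_succ rk r hgrade hD1 hD2 n]
    have h1 : (r:ℚ) • 1 + upMat rk n * (upMat rk n)ᵀ + t • (1 : Matrix _ _ ℚ)
        = upMat rk n * (upMat rk n)ᵀ + (t + r) • 1 := by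
      rw [add_smul]
      abel
    rw [h1, step_det _ hmono (t + r),
      show (upMat rk n)ᵀ * upMat rk n = duMat rk n from rfl, ih (t + r), mul_comm]
    conv_rhs => rw [Finset.prod_range_succ']
    congr 1
    · refine Finset.prod_congr rfl fun i _ => ?_
      rw [factor_congr rk (t + (r:ℚ) * (((i+1 : ℕ) : ℚ) + 1)) (Nat.succ_sub_succ n i)]
      congr 1
      push_cast
      ring
    · have h0 : n + 1 - 0 = n + 1 := rfl
      simp only [h0, Nat.add_sub_cancel, Nat.cast_zero]
      rw [if_neg (Nat.succ_ne_zero n)]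
      have h2 : (Fintype.card {x : α // rk x = n + 1} : ℤ)
          - (Fintype.card {x : α // rk x = n} : ℤ)
          = ((Fintype.card {x : α // rk x = n + 1} - Fintype.card {x : α // rk x = n} : ℕ) : ℤ) := by
        omega
      rw [h2, zpow_natCast]
      congr 1
      push_cast
      ring
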